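/- arXiv:math/0605486 — 4 statements merged into one kernel-verified Lean document; each statement's English description precedes it below -/
import Mathlib

section
/- For every finite interval graph G on n vertices there exists a bijection f : V(G) → {1,…,n} such that for all vertices u, v, w with f(u) < f(w) < f(v), if u is adjacent to v then u is adjacent to w. -/
/-- A graph is an interval graph: vertices map to closed intervals with
adjacency (for distinct vertices) iff the intervals intersect. -/
def IsIntervalGraph {V : Type*} (G : SimpleGraph V) : Prop :=
  ∃ l r : V → ℝ, ∀ u v : V, u ≠ v →
    (G.Adj u v ↔ (Set.Icc (l u) (r u) ∩ Set.Icc (l v) (r v)).Nonempty)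

/-- every finite interval graph on n vertices admits a bijective
ordering f : V ≃ {1,…,n} such that f(u) < f(w) < f(v) and Adj u v imply Adj u w. -/
theorem stmt1 {V : Type*} [Fintype V] (G : SimpleGraph V)
    (hG : IsIntervalGraph G) :
    ∃ f : V ≃ Fin (Fintype.card V),
      ∀ u v w : V, (f u : ℕ) < (f w : ℕ) → (f w : ℕ) < (f v : ℕ) →
        G.Adj u v → G.Adj u w := by
  classical
  obtain ⟨l, r, hlr⟩ := hG
  let e := Fintype.equivFin V
  let key : V → Bool ×ₗ (ℝ ×ₗ Fin (Fintype.card V)) :=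
    fun v => toLex (!decide (l v ≤ r v), toLex (l v, e v))
  have hinj : Function.Injective key := by
    intro a b hab
    have h2 : e a = e b := by
      have := congrArg (fun x => (ofLex (ofLex x).2).2) hab
      simpa [key] using this
    exact e.injective h2
  letI : LinearOrder V := LinearOrder.lift' key hinj
  have hlt : ∀ {a b : V}, a < b ↔ key a < key b := Iff.rfl
  let g := Finset.univ.orderIsoOfFin (Finset.card_univ (α := V))
  let f : V ≃ Fin (Fintype.card V) :=
    (Equiv.subtypeUnivEquiv (fun x => Finset.mem_univ x)).symm.trans g.toEquiv.symm
  have hf : ∀ {a b : V}, (f a : ℕ) < (f b : ℕ) → a < b := by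
    intro a b hab
    have : f a < f b := hab
    have h2 : g (f a) < g (f b) := g.lt_iff_lt.mpr this
    have h3 : g (f a) = ⟨a, Finset.mem_univ a⟩ := by
      simp [f, g]
    have h4 : g (f b) = ⟨b, Finset.mem_univ b⟩ := by
      simp [f, g]
    rw [h3, h4] at h2
    exact h2
  refine ⟨f, ?_⟩
  intro u v w huw hwv hadj
  have huw' : u < w := hf huw
  have hwv' : w < v := hf hwv
  have huv' : u < v := lt_trans huw' hwv'
  have hne_uv : u ≠ v := ne_of_lt huv'
  obtain ⟨x, ⟨hxu1, hxu2⟩, hxv1, hxv2⟩ := (hlr u v hne_uv).mp hadj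
  have hu_ne : l u ≤ r u := le_trans hxu1 hxu2
  have hv_ne : l v ≤ r v := le_trans hxv1 hxv2
  have hku : key u < key w := hlt.mp huw'
  have hkv : key w < key v := hlt.mp hwv'
  rw [Prod.Lex.lt_iff] at hku hkv
  simp only [hu_ne, hv_ne, decide_eq_true_eq, Bool.not_true, decide_true, key, ofLex_toLex] at hku hkv
  -- first components: key u has false, key v has false
  have hw_ne : l w ≤ r w := by
    by_contra hc
    have : (!decide (l w ≤ r w)) = true := by simp [hc]
    rcases hkv with h | ⟨h1, h2⟩
    · rw [this] at h; exact absurd h (by simp)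
    · rw [this] at h1; exact absurd h1 (by simp)
  have hw_first : (!decide (l w ≤ r w)) = false := by simp [hw_ne]
  have hlu_lw : l u ≤ l w := by
    rcases hku with h | ⟨h1, h2⟩
    · rw [hw_first] at h; exact absurd h (by simp)
    · rw [Prod.Lex.lt_iff] at h2
      rcases h2 with h | ⟨h1', _⟩
      · exact le_of_lt h
      · exact le_of_eq h1'
  have hlw_lv : l w ≤ l v := by
    rcases hkv with h | ⟨h1, h2⟩
    · rw [hw_first] at h; exact absurd h (by simp)
    · rw [Prod.Lex.lt_iff] at h2
      rcases h2 with h | ⟨h1', _⟩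
      · exact le_of_lt h
      · exact le_of_eq h1'
  have hne_uw : u ≠ w := ne_of_lt huw'
  refine (hlr u w hne_uw).mpr ⟨l w, ⟨hlu_lw, ?_⟩, le_refl _, hw_ne⟩
  exact le_trans hlw_lv (le_trans hxv1 hxu2)
end

section
/- Let r(n) be the largest real number such that some non-complete graph G on n vertices satisfies cub(G) = r(n)·box(G). Then there exists an interval graph G' on n vertices with cub(G') = r(n). -/
/-- A graph is an indifference (unit interval) graph. -/
def IsIndifferenceGraph {V : Type*} (G : SimpleGraph V) : Prop :=
  ∃ l : V → ℝ, ∀ u v : V, u ≠ v →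
    (G.Adj u v ↔ (Set.Icc (l u) (l u + 1) ∩ Set.Icc (l v) (l v + 1)).Nonempty)

/-- Boxicity: the least b such that E(G) is the intersection of the edge sets of
b interval graphs on V(G).  (For a complete graph, b = 0 works.) -/
noncomputable def boxicity {V : Type*} (G : SimpleGraph V) : ℕ :=
  sInf {b : ℕ | ∃ I : Fin b → SimpleGraph V,
    (∀ i, IsIntervalGraph (I i)) ∧ ∀ u v : V, G.Adj u v ↔ ∀ i, (I i).Adj u v}

/-- Cubicity: the least b such that E(G) is the intersection of the edge sets of
b indifference graphs on V(G).  (For a complete graph, b = 0 works.) -/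
noncomputable def cubicity {V : Type*} (G : SimpleGraph V) : ℕ :=
  sInf {b : ℕ | ∃ I : Fin b → SimpleGraph V,
    (∀ i, IsIndifferenceGraph (I i)) ∧ ∀ u v : V, G.Adj u v ↔ ∀ i, (I i).Adj u v}

-- === aux ===

def cubSet {V : Type*} (G : SimpleGraph V) : Set ℕ :=
  {b : ℕ | ∃ I : Fin b → SimpleGraph V,
    (∀ i, IsIndifferenceGraph (I i)) ∧ ∀ u v : V, G.Adj u v ↔ ∀ i, (I i).Adj u v}

def boxSet {V : Type*} (G : SimpleGraph V) : Set ℕ :=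
  {b : ℕ | ∃ I : Fin b → SimpleGraph V,
    (∀ i, IsIntervalGraph (I i)) ∧ ∀ u v : V, G.Adj u v ↔ ∀ i, (I i).Adj u v}

lemma cubicity_def {V : Type*} (G : SimpleGraph V) : cubicity G = sInf (cubSet G) := rfl
lemma boxicity_def {V : Type*} (G : SimpleGraph V) : boxicity G = sInf (boxSet G) := rfl

lemma indiff_interval {V : Type*} {G : SimpleGraph V} (h : IsIndifferenceGraph G) :
    IsIntervalGraph G := by
  obtain ⟨l, hl⟩ := h
  exact ⟨l, fun v => l v + 1, hl⟩

lemma icc_inter_nonempty (a b : ℝ) :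
    (Set.Icc a (a + 1) ∩ Set.Icc b (b + 1)).Nonempty ↔ |a - b| ≤ 1 := by
  constructor
  · rintro ⟨x, ⟨h1, h2⟩, h3, h4⟩
    rw [abs_le]; constructor <;> linarith
  · intro h
    rw [abs_le] at h
    exact ⟨max a b, ⟨le_max_left _ _, by apply max_le <;> linarith⟩,
      ⟨le_max_right _ _, by apply max_le <;> linarith⟩⟩

lemma top_indiff {V : Type*} : IsIndifferenceGraph (⊤ : SimpleGraph V) := by
  refine ⟨fun _ => 0, fun u v huv => ?_⟩
  simp only [SimpleGraph.top_adj, icc_inter_nonempty, sub_self, abs_zero]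
  norm_num
  exact huv

lemma bot_indiff {n : ℕ} : IsIndifferenceGraph (⊥ : SimpleGraph (Fin n)) := by
  refine ⟨fun u => 3 * (u : ℕ), fun u v huv => ?_⟩
  simp only [SimpleGraph.bot_adj, false_iff, icc_inter_nonempty]
  intro h
  rw [abs_le] at h
  have huv' : (u : ℕ) ≠ (v : ℕ) := fun hh => huv (Fin.ext hh)
  rcases lt_or_gt_of_ne huv' with hlt | hlt
  · have : ((u : ℕ) : ℝ) + 1 ≤ ((v : ℕ) : ℝ) := by exact_mod_cast Nat.succ_le_of_lt hlt
    linarith [h.1, h.2]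
  · have : ((v : ℕ) : ℝ) + 1 ≤ ((u : ℕ) : ℝ) := by exact_mod_cast Nat.succ_le_of_lt hlt
    linarith [h.1, h.2]

lemma zero_not_mem_cubSet {V : Type*} (u : V) (G : SimpleGraph V) : 0 ∉ cubSet G := by
  rintro ⟨I, -, h⟩
  exact G.irrefl ((h u u).2 (fun i => i.elim0))

lemma zero_not_mem_boxSet {V : Type*} (u : V) (G : SimpleGraph V) : 0 ∉ boxSet G := by
  rintro ⟨I, -, h⟩
  exact G.irrefl ((h u u).2 (fun i => i.elim0))

lemma one_le_sInf {S : Set ℕ} (h0 : 0 ∉ S) (hne : S.Nonempty) : 1 ≤ sInf S := by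
  rcases Nat.eq_zero_or_pos (sInf S) with h | h
  · exact absurd (h ▸ Nat.sInf_mem hne) h0
  · exact h

-- self-representation
lemma one_mem_cubSet_of_indiff {V : Type*} {G : SimpleGraph V} (h : IsIndifferenceGraph G) :
    1 ∈ cubSet G :=
  ⟨fun _ => G, fun _ => h, fun u v => ⟨fun h _ => h, fun h => h 0⟩⟩

lemma one_mem_boxSet_of_interval {V : Type*} {G : SimpleGraph V} (h : IsIntervalGraph G) :
    1 ∈ boxSet G :=
  ⟨fun _ => G, fun _ => h, fun u v => ⟨fun h _ => h, fun h => h 0⟩⟩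

-- padding
lemma cubSet_mono {V : Type*} {G : SimpleGraph V} {k m : ℕ} (hk : k ∈ cubSet G)
    (hkm : k ≤ m) : m ∈ cubSet G := by
  obtain ⟨I, hind, hrep⟩ := hk
  refine ⟨fun j => if h : (j : ℕ) < k then I ⟨j, h⟩ else ⊤, fun j => ?_, fun u v => ?_⟩
  · by_cases h : (j : ℕ) < k
    · simpa [h] using hind ⟨j, h⟩
    · simpa [h] using top_indiff
  · constructor
    · intro hadj j
      by_cases h : (j : ℕ) < k
      · simpa [h] using (hrep u v).1 hadj ⟨j, h⟩
      · simpa [h] using hadj.ne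
    · intro h
      refine (hrep u v).2 (fun i => ?_)
      have := h ⟨(i : ℕ), lt_of_lt_of_le i.2 hkm⟩
      simpa [i.2] using this

-- composition
lemma comp_mem_cubSet {V : Type*} {G : SimpleGraph V} {b C : ℕ}
    (I : Fin b → SimpleGraph V)
    (hrep : ∀ u v : V, G.Adj u v ↔ ∀ i, (I i).Adj u v)
    (hC : ∀ i, C ∈ cubSet (I i)) : b * C ∈ cubSet G := by
  choose J hJind hJrep using hC
  refine ⟨fun k => J (finProdFinEquiv.symm k).1 (finProdFinEquiv.symm k).2,
    fun k => hJind _ _, fun u v => ?_⟩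
  constructor
  · intro hadj k
    exact (hJrep _ u v).1 ((hrep u v).1 hadj _) _
  · intro h
    refine (hrep u v).2 (fun i => (hJrep i u v).2 (fun j => ?_))
    have := h (finProdFinEquiv (i, j))
    simpa using this

open scoped Classical in
noncomputable def auxG {n : ℕ} (G : SimpleGraph (Fin n)) (p : Fin n × Fin n) :
    SimpleGraph (Fin n) :=
  if G.Adj p.1 p.2 ∨ p.1 = p.2 then ⊤
  else SimpleGraph.fromRel (fun u v => ¬((u = p.1 ∧ v = p.2) ∨ (u = p.2 ∧ v = p.1)))

lemma auxG_indiff {n : ℕ} (G : SimpleGraph (Fin n)) (p : Fin n × Fin n) :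
    IsIndifferenceGraph (auxG G p) := by
  unfold auxG
  split_ifs with h
  · exact top_indiff
  · push_neg at h
    refine ⟨fun u => if u = p.1 then 0 else if u = p.2 then 2 else 1, fun u v huv => ?_⟩
    rw [SimpleGraph.fromRel_adj, icc_inter_nonempty]
    by_cases h1 : u = p.1 <;> by_cases h2 : u = p.2 <;>
      by_cases h3 : v = p.1 <;> by_cases h4 : v = p.2 <;>
      simp only [h1, h2, h3, h4, if_true, if_false, eq_self_iff_true, ite_true, ite_false] <;>
      norm_num
    all_goals (first | (exact ⟨huv, by tauto⟩) | (simp_all <;> norm_num))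

lemma auxG_rep {n : ℕ} (G : SimpleGraph (Fin n)) (u v : Fin n) :
    G.Adj u v ↔ ∀ p : Fin n × Fin n, (auxG G p).Adj u v := by
  constructor
  · intro hadj p
    unfold auxG
    split_ifs with h
    · exact hadj.ne
    · push_neg at h
      rw [SimpleGraph.fromRel_adj]
      refine ⟨hadj.ne, Or.inl ?_⟩
      rintro (⟨rfl, rfl⟩ | ⟨rfl, rfl⟩)
      · exact h.1 hadj
      · exact h.1 hadj.symm
  · intro h
    have huv : u ≠ v := by
      have := h (u, u)
      unfold auxG at this
      split_ifs at this with h'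
      · exact this.ne
      · exact (SimpleGraph.fromRel_adj _ _ _).1 this |>.1
    by_contra hna
    have := h (u, v)
    unfold auxG at this
    rw [if_neg (by push_neg; exact ⟨hna, huv⟩), SimpleGraph.fromRel_adj] at this
    rcases this.2 with h' | h'
    · exact h' (Or.inl ⟨rfl, rfl⟩)
    · exact h' (Or.inr ⟨rfl, rfl⟩)

lemma cubSet_nonempty {n : ℕ} (G : SimpleGraph (Fin n)) : (cubSet G).Nonempty := by
  refine ⟨n * n, fun k => auxG G (finProdFinEquiv.symm k), fun k => auxG_indiff _ _,
    fun u v => ?_⟩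
  rw [auxG_rep G u v]
  constructor
  · intro h k; exact h _
  · intro h p
    have := h (finProdFinEquiv p)
    simpa using this

/-- if r is the largest real with cub(G) = r·box(G) for some
non-complete graph G on n vertices, then some interval graph G' on n vertices
has cub(G') = r. -/
theorem stmt5 (n : ℕ) (r : ℝ)
    (hmax : ∀ G : SimpleGraph (Fin n), (¬ ∀ u v : Fin n, u ≠ v → G.Adj u v) →
      (cubicity G : ℝ) ≤ r * (boxicity G : ℝ))
    (hatt : ∃ G : SimpleGraph (Fin n), (¬ ∀ u v : Fin n, u ≠ v → G.Adj u v) ∧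
      (cubicity G : ℝ) = r * (boxicity G : ℝ)) :
    ∃ G' : SimpleGraph (Fin n), IsIntervalGraph G' ∧ (cubicity G' : ℝ) = r := by
  obtain ⟨G, hGnc, hGeq⟩ := hatt
  push_neg at hGnc
  obtain ⟨a, b0, hab, -⟩ := hGnc
  -- the empty graph is a non-complete indifference graph, so r ≥ 1
  have hbotnc : ¬ ∀ u v : Fin n, u ≠ v → (⊥ : SimpleGraph (Fin n)).Adj u v :=
    fun h => (h a b0 hab)
  have hcubbot : cubicity (⊥ : SimpleGraph (Fin n)) = 1 := by
    rw [cubicity_def]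
    exact le_antisymm (Nat.sInf_le (one_mem_cubSet_of_indiff bot_indiff))
      (one_le_sInf (zero_not_mem_cubSet a _) ⟨1, one_mem_cubSet_of_indiff bot_indiff⟩)
  have hboxbot : boxicity (⊥ : SimpleGraph (Fin n)) = 1 := by
    rw [boxicity_def]
    exact le_antisymm
      (Nat.sInf_le (one_mem_boxSet_of_interval (indiff_interval bot_indiff)))
      (one_le_sInf (zero_not_mem_boxSet a _)
        ⟨1, one_mem_boxSet_of_interval (indiff_interval bot_indiff)⟩)
  have hr1 : (1 : ℝ) ≤ r := by
    have := hmax ⊥ hbotnc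
    rw [hcubbot, hboxbot] at this
    simpa using this
  -- an optimal box representation of G
  have hboxSetne : (boxSet G).Nonempty := by
    obtain ⟨m, I, hi, hrep⟩ := cubSet_nonempty G
    exact ⟨m, I, fun i => indiff_interval (hi i), hrep⟩
  have hboxG_mem : boxicity G ∈ boxSet G := by
    rw [boxicity_def]; exact Nat.sInf_mem hboxSetne
  have hboxpos : 1 ≤ boxicity G := by
    rw [boxicity_def]; exact one_le_sInf (zero_not_mem_boxSet a G) hboxSetne
  obtain ⟨I, hIint, hIrep⟩ := hboxG_mem
  haveI : Nonempty (Fin (boxicity G)) := ⟨⟨0, hboxpos⟩⟩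
  obtain ⟨i0, hi0⟩ := Finite.exists_max (fun i => cubicity (I i))
  set C := cubicity (I i0) with hCdef
  have hCmem : ∀ i, C ∈ cubSet (I i) := fun i =>
    cubSet_mono (by rw [cubicity_def] at hCdef ⊢; exact Nat.sInf_mem (cubSet_nonempty (I i)))
      (hi0 i)
  have hcub_le : cubicity G ≤ boxicity G * C := by
    rw [cubicity_def]
    exact Nat.sInf_le (comp_mem_cubSet I hIrep hCmem)
  -- r ≤ C
  have hrC : r ≤ (C : ℝ) := by
    have h1 : (cubicity G : ℝ) ≤ (boxicity G : ℝ) * (C : ℝ) := by exact_mod_cast hcub_le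
    rw [hGeq, mul_comm ((boxicity G : ℕ) : ℝ)] at h1
    have hbp : (0 : ℝ) < ((boxicity G : ℕ) : ℝ) := by exact_mod_cast hboxpos
    exact le_of_mul_le_mul_right h1 hbp
  by_cases hcomp : ∀ u v : Fin n, u ≠ v → (I i0).Adj u v
  · -- I i0 is complete, so its cubicity is 1, hence r = 1; take the empty graph
    have mem1 : 1 ∈ cubSet (I i0) := by
      refine ⟨fun _ => ⊤, fun _ => top_indiff, fun u v => ?_⟩
      constructor
      · intro h j; simpa using h.ne
      · intro h
        have : u ≠ v := by simpa using (h 0).ne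
        exact hcomp u v this
    have hC1 : C = 1 := by
      rw [hCdef, cubicity_def]
      exact le_antisymm (Nat.sInf_le mem1) (one_le_sInf (zero_not_mem_cubSet a _) ⟨1, mem1⟩)
    have hreq : r = 1 := le_antisymm (by rw [hC1] at hrC; simpa using hrC) hr1
    exact ⟨⊥, indiff_interval bot_indiff, by rw [hcubbot, hreq]; norm_num⟩
  · -- I i0 is a non-complete interval graph with cubicity exactly r
    have hbox1 : boxicity (I i0) = 1 := by
      rw [boxicity_def]
      exact le_antisymm (Nat.sInf_le (one_mem_boxSet_of_interval (hIint i0)))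
        (one_le_sInf (zero_not_mem_boxSet a _) ⟨1, one_mem_boxSet_of_interval (hIint i0)⟩)
    have hle := hmax (I i0) hcomp
    rw [hbox1] at hle
    exact ⟨I i0, hIint i0, le_antisymm (by simpa using hle) hrC⟩
end

section
/- Let G be an interval graph on vertex set V of size n = 2^k with ordering f as in the ordering lemma. Fix 1 ≤ i ≤ k, let A_i = {v : ⌈f(v)/2^{i-1}⌉ is odd} and B_i = {v : ⌈f(v)/2^{i-1}⌉ is even}, and define intervals Π_i(v) = [n+f(v), 2n+f(v)] for v ∈ B_i; Π_i(v) = [0, n] for v ∈ A_i with no neighbor in B_i; and Π_i(v) = [t, n+t] with t = max{f(x) : x ∈ N(v) ∩ B_i} otherwise. Then the intersection graph I_i of these unit-length (length n) intervals satisfies E(I_i) ⊇ E(G). -/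
/-- The rank of a vertex under an ordering f : V ≃ Fin n, as an element of {1,…,n}. -/
def rk {V : Type*} {n : ℕ} (f : V ≃ Fin n) (v : V) : ℕ := (f v : ℕ) + 1

/-- B_i : the vertices whose rank lies in an even-indexed block of the i-th dyadic
partition, i.e. ⌈rk(v)/2^(i-1)⌉ is even. -/
def Bblk {V : Type*} [Fintype V] [DecidableEq V] {n : ℕ} (f : V ≃ Fin n) (i : ℕ) :
    Finset V :=
  Finset.univ.filter (fun v => ((rk f v + 2 ^ (i - 1) - 1) / 2 ^ (i - 1)) % 2 = 0)

/-- t = max{f(x) : x ∈ N(v) ∩ B_i}. -/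
def tmax {V : Type*} [Fintype V] [DecidableEq V] {n : ℕ} (G : SimpleGraph V)
    [DecidableRel G.Adj] (f : V ≃ Fin n) (i : ℕ) (v : V) : ℕ :=
  (G.neighborFinset v ∩ Bblk f i).sup (rk f)

/-- The interval Π_i(v) of the construction. -/
noncomputable def PiInt {V : Type*} [Fintype V] [DecidableEq V] {n : ℕ}
    (G : SimpleGraph V) [DecidableRel G.Adj] (f : V ≃ Fin n) (i : ℕ) (v : V) :
    Set ℝ :=
  if v ∈ Bblk f i then Set.Icc ((n : ℝ) + rk f v) (2 * n + rk f v)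
  else if (G.neighborFinset v ∩ Bblk f i).Nonempty then
    Set.Icc ((tmax G f i v : ℝ)) ((n : ℝ) + tmax G f i v)
  else Set.Icc (0 : ℝ) (n : ℝ)

/-- The intersection graph I_i of the intervals Π_i. -/
noncomputable def Igraph {V : Type*} [Fintype V] [DecidableEq V] {n : ℕ}
    (G : SimpleGraph V) [DecidableRel G.Adj] (f : V ≃ Fin n) (i : ℕ) :
    SimpleGraph V where
  Adj u v := u ≠ v ∧ (PiInt G f i u ∩ PiInt G f i v).Nonempty
  symm := by
    constructor
    intro u v h
    exact ⟨h.1.symm, by rw [Set.inter_comm]; exact h.2⟩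
  loopless := by
    constructor
    intro u h
    exact h.1 rfl

/-- E(I_i) ⊇ E(G). -/
theorem stmt8 {V : Type*} [Fintype V] [DecidableEq V] (k : ℕ)
    (G : SimpleGraph V) [DecidableRel G.Adj]
    (f : V ≃ Fin (2 ^ k))
    (hf : ∀ u v w : V, (f u : ℕ) < (f w : ℕ) → (f w : ℕ) < (f v : ℕ) →
      G.Adj u v → G.Adj u w)
    (i : ℕ) (hi1 : 1 ≤ i) (hik : i ≤ k) :
    ∀ u v : V, G.Adj u v → (Igraph G f i).Adj u v := by
  intro u v huv
  refine ⟨huv.ne, ?_⟩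
  have hrkn : ∀ w : V, (rk f w : ℝ) ≤ 2 ^ k := by
    intro w
    have : rk f w ≤ 2 ^ k := (f w).2
    exact_mod_cast this
  have hrk0 : ∀ w : V, (0 : ℝ) ≤ (rk f w : ℝ) := fun w => Nat.cast_nonneg _
  have htle : ∀ w : V, ((tmax G f i w : ℕ) : ℝ) ≤ 2 ^ k := by
    intro w
    have : tmax G f i w ≤ 2 ^ k := Finset.sup_le fun x _ => (f x).2
    exact_mod_cast this
  have ht0 : ∀ w : V, (0 : ℝ) ≤ ((tmax G f i w : ℕ) : ℝ) := fun w => Nat.cast_nonneg _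
  have hn0 : (0 : ℝ) ≤ 2 ^ k := by positivity
  by_cases hu : u ∈ Bblk f i <;> by_cases hv : v ∈ Bblk f i
  · -- both in B
    refine ⟨(2 ^ k : ℝ) + rk f u + rk f v, ?_, ?_⟩ <;>
      simp only [PiInt, if_pos hu, if_pos hv, Set.mem_Icc] <;>
      constructor <;> push_cast <;>
      [skip; skip; skip; skip] <;>
      first
        | linarith [hrkn u, hrkn v, hrk0 u, hrk0 v]
  · -- u ∈ B, v ∉ B
    have hmem : u ∈ G.neighborFinset v ∩ Bblk f i :=
      Finset.mem_inter.mpr ⟨(SimpleGraph.mem_neighborFinset _ _ _).mpr huv.symm, hu⟩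
    have hne : (G.neighborFinset v ∩ Bblk f i).Nonempty := ⟨u, hmem⟩
    have htu : (rk f u : ℝ) ≤ (tmax G f i v : ℝ) := by
      exact_mod_cast Finset.le_sup (f := rk f) hmem
    refine ⟨(2 ^ k : ℝ) + rk f u, ?_, ?_⟩ <;>
      simp only [PiInt, if_pos hu, if_neg hv, if_pos hne, Set.mem_Icc] <;>
      constructor <;> push_cast <;>
      linarith [hrkn u, hrk0 u, htle v, ht0 v]
  · -- v ∈ B, u ∉ B
    have hmem : v ∈ G.neighborFinset u ∩ Bblk f i :=
      Finset.mem_inter.mpr ⟨(SimpleGraph.mem_neighborFinset _ _ _).mpr huv, hv⟩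
    have hne : (G.neighborFinset u ∩ Bblk f i).Nonempty := ⟨v, hmem⟩
    have htv : (rk f v : ℝ) ≤ (tmax G f i u : ℝ) := by
      exact_mod_cast Finset.le_sup (f := rk f) hmem
    refine ⟨(2 ^ k : ℝ) + rk f v, ?_, ?_⟩ <;>
      simp only [PiInt, if_pos hv, if_neg hu, if_pos hne, Set.mem_Icc] <;>
      constructor <;> push_cast <;>
      linarith [hrkn v, hrk0 v, htle u, ht0 u]
  · -- neither in B
    refine ⟨(2 ^ k : ℝ), ?_, ?_⟩ <;>
      simp only [PiInt, if_neg hu, if_neg hv] <;>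
      split_ifs <;>
      simp only [Set.mem_Icc] <;>
      constructor <;> push_cast <;>
      linarith [htle u, ht0 u, htle v, ht0 v, hn0]
end

section
/- With the setup of the previous construction (interval graph G on n = 2^k vertices, ordering f, and indifference graphs I₁,…,I_k built from the dyadic partitions), if (u,v) ∉ E(G) then there exists i with 1 ≤ i ≤ k such that (u,v) ∉ E(I_i). Consequently E(G) = E(I₁) ∩ ⋯ ∩ E(I_k). -/
section aux
variable {V : Type*} [Fintype V] [DecidableEq V] {n : ℕ}

lemma rk_le (f : V ≃ Fin n) (v : V) : rk f v ≤ n := (f v).isLt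

variable (G : SimpleGraph V) [DecidableRel G.Adj]

lemma tmax_le (f : V ≃ Fin n) (i : ℕ) (v : V) : tmax G f i v ≤ n :=
  Finset.sup_le fun x _ => rk_le f x

lemma piInt_notB (f : V ≃ Fin n) (i : ℕ) {v : V} (h : v ∉ Bblk f i) :
    PiInt G f i v = Set.Icc ((tmax G f i v : ℝ)) ((n : ℝ) + tmax G f i v) := by
  unfold PiInt
  rw [if_neg h]
  split_ifs with h2
  · rfl
  · rw [Finset.not_nonempty_iff_eq_empty] at h2
    unfold tmax
    rw [h2, Finset.sup_empty]
    simp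

lemma piInt_B (f : V ≃ Fin n) (i : ℕ) {v : V} (h : v ∈ Bblk f i) :
    PiInt G f i v = Set.Icc ((n : ℝ) + rk f v) (2 * n + rk f v) := by
  unfold PiInt; rw [if_pos h]

lemma mem_Bblk_iff (f : V ≃ Fin n) (i' : ℕ) (v : V) :
    v ∈ Bblk f (i' + 1) ↔ Nat.testBit (f v) i' = true := by
  unfold Bblk rk
  simp only [Finset.mem_filter, Finset.mem_univ, true_and, Nat.add_sub_cancel]
  rw [Nat.testBit_eq_decide_div_mod_eq]
  have h2 : (f v : ℕ) + 1 + 2 ^ i' - 1 = (f v : ℕ) + 2 ^ i' := by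
    have := Nat.pow_pos (n := i') (by norm_num : 0 < 2)
    omega
  rw [h2, Nat.add_div_right _ (Nat.pow_pos (n := i') (by norm_num : 0 < 2)),
    decide_eq_true_iff]
  omega

lemma exists_bit {k a b : ℕ} (hab : a < b) (hb : b < 2 ^ k) :
    ∃ i, i < k ∧ Nat.testBit a i = false ∧ Nat.testBit b i = true := by
  obtain ⟨i, hi1, hi2⟩ := Nat.exists_most_significant_bit
    (n := a ^^^ b) (by intro h; have : a = b := Nat.eq_of_testBit_eq fun j => by have := congrArg (Nat.testBit · j) h; simpa [Nat.testBit_xor] using this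
                       omega)
  rw [Nat.testBit_xor] at hi1
  have hdiff : Nat.testBit a i ≠ Nat.testBit b i := by
    intro h; rw [h] at hi1; simp at hi1
  have heq : ∀ j, i < j → Nat.testBit a j = Nat.testBit b j := by
    intro j hj
    have := hi2 j hj
    rw [Nat.testBit_xor] at this
    rcases Bool.eq_false_or_eq_true (Nat.testBit a j) with h|h <;>
      rcases Bool.eq_false_or_eq_true (Nat.testBit b j) with h'|h' <;>
      simp [h, h'] at this ⊢
  have hba : Nat.testBit a i = false ∧ Nat.testBit b i = true := by
    rcases Bool.eq_false_or_eq_true (Nat.testBit a i) with ha|ha <;>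
      rcases Bool.eq_false_or_eq_true (Nat.testBit b i) with hb'|hb'
    · exact absurd (ha.trans hb'.symm) hdiff
    · have : b < a := Nat.lt_of_testBit i hb' ha fun j hj => (heq j hj).symm
      omega
    · exact ⟨ha, hb'⟩
    · exact absurd (ha.trans hb'.symm) hdiff
  refine ⟨i, ?_, hba.1, hba.2⟩
  by_contra h
  have : Nat.testBit b i = false :=
    Nat.testBit_lt_two_pow (lt_of_lt_of_le hb (Nat.pow_le_pow_right (by norm_num) (not_lt.mp h)))
  rw [hba.2] at this; simp at this

lemma adj_Igraph_aux (f : V ≃ Fin n) (i : ℕ) {u v : V} (h : G.Adj u v) :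
    (PiInt G f i u ∩ PiInt G f i v).Nonempty := by
  have hnu : (rk f u : ℝ) ≤ n := by exact_mod_cast rk_le f u
  have hnv : (rk f v : ℝ) ≤ n := by exact_mod_cast rk_le f v
  have htu : (tmax G f i u : ℝ) ≤ n := by exact_mod_cast tmax_le G f i u
  have htv : (tmax G f i v : ℝ) ≤ n := by exact_mod_cast tmax_le G f i v
  have h0u : (0:ℝ) ≤ rk f u := Nat.cast_nonneg _
  have h0v : (0:ℝ) ≤ rk f v := Nat.cast_nonneg _
  have h0tu : (0:ℝ) ≤ tmax G f i u := Nat.cast_nonneg _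
  have h0tv : (0:ℝ) ≤ tmax G f i v := Nat.cast_nonneg _
  by_cases hu : u ∈ Bblk f i <;> by_cases hv : v ∈ Bblk f i
  · refine ⟨(2 * n : ℝ), ?_, ?_⟩ <;> rw [piInt_B G f i ‹_›, Set.mem_Icc] <;>
      constructor <;> linarith
  · -- u ∈ B, v ∉ B, adjacent
    have hum : u ∈ G.neighborFinset v ∩ Bblk f i :=
      Finset.mem_inter.mpr ⟨(G.mem_neighborFinset v u).mpr h.symm, hu⟩
    have ht : rk f u ≤ tmax G f i v := Finset.le_sup hum
    have ht' : (rk f u : ℝ) ≤ tmax G f i v := by exact_mod_cast ht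
    refine ⟨(n : ℝ) + rk f u, ?_, ?_⟩
    · rw [piInt_B G f i hu, Set.mem_Icc]; constructor <;> linarith
    · rw [piInt_notB G f i hv, Set.mem_Icc]; constructor <;> linarith
  · have hvm : v ∈ G.neighborFinset u ∩ Bblk f i :=
      Finset.mem_inter.mpr ⟨(G.mem_neighborFinset u v).mpr h, hv⟩
    have ht : rk f v ≤ tmax G f i u := Finset.le_sup hvm
    have ht' : (rk f v : ℝ) ≤ tmax G f i u := by exact_mod_cast ht
    refine ⟨(n : ℝ) + rk f v, ?_, ?_⟩
    · rw [piInt_notB G f i hu, Set.mem_Icc]; constructor <;> linarith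
    · rw [piInt_B G f i hv, Set.mem_Icc]; constructor <;> linarith
  · refine ⟨(n : ℝ), ?_, ?_⟩ <;> rw [piInt_notB G f i ‹_›, Set.mem_Icc] <;>
      constructor <;> linarith

lemma disjoint_Pi (f : V ≃ Fin n)
    (hf : ∀ u v w : V, (f u : ℕ) < (f w : ℕ) → (f w : ℕ) < (f v : ℕ) →
      G.Adj u v → G.Adj u w)
    {i : ℕ} {u v : V} (huv : ¬ G.Adj u v) (hlt : (f u : ℕ) < (f v : ℕ))
    (hu : u ∉ Bblk f i) (hv : v ∈ Bblk f i) :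
    PiInt G f i u ∩ PiInt G f i v = ∅ := by
  have ht : tmax G f i u < rk f v := by
    refine (Finset.sup_lt_iff (show (⊥ : ℕ) < rk f v from Nat.succ_pos _)).mpr ?_
    intro x hx
    have hadj : G.Adj u x := (G.mem_neighborFinset u x).mp (Finset.mem_inter.mp hx).1
    rcases lt_trichotomy ((f x : ℕ)) ((f v : ℕ)) with h|h|h
    · exact Nat.add_lt_add_right h 1
    · have hxv : x = v := f.injective (Fin.ext h)
      exact absurd (hxv ▸ hadj) huv
    · exact absurd (hf u x v hlt h hadj) huv
  have ht' : (tmax G f i u : ℝ) < rk f v := by exact_mod_cast ht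
  rw [piInt_notB G f i hu, piInt_B G f i hv]
  ext x
  simp only [Set.mem_inter_iff, Set.mem_Icc, Set.mem_empty_iff_false, iff_false]
  rintro ⟨⟨_, h1⟩, h2, _⟩
  linarith

end aux

/-- if (u,v) ∉ E(G) then some I_i, 1 ≤ i ≤ k, misses (u,v);
consequently E(G) = E(I_1) ∩ ⋯ ∩ E(I_k). -/


theorem stmt9 {V : Type*} [Fintype V] [DecidableEq V] (k : ℕ)
    (G : SimpleGraph V) [DecidableRel G.Adj]
    (f : V ≃ Fin (2 ^ k))
    (hf : ∀ u v w : V, (f u : ℕ) < (f w : ℕ) → (f w : ℕ) < (f v : ℕ) →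
      G.Adj u v → G.Adj u w) :
    (∀ u v : V, u ≠ v → ¬ G.Adj u v →
      ∃ i, 1 ≤ i ∧ i ≤ k ∧ ¬ (Igraph G f i).Adj u v) ∧
    (∀ u v : V, G.Adj u v ↔
      (u ≠ v ∧ ∀ i, 1 ≤ i → i ≤ k → (Igraph G f i).Adj u v)) := by
  have ordered : ∀ u v : V, ¬ G.Adj u v → (f u : ℕ) < (f v : ℕ) →
      ∃ i, 1 ≤ i ∧ i ≤ k ∧ PiInt G f i u ∩ PiInt G f i v = ∅ := by
    intro u v huv hlt
    obtain ⟨i', hik, ha, hb⟩ := exists_bit hlt (f v).isLt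
    refine ⟨i' + 1, Nat.le_add_left 1 i', by omega, ?_⟩
    have hu : u ∉ Bblk f (i' + 1) := by
      rw [mem_Bblk_iff]; simp [ha]
    have hv : v ∈ Bblk f (i' + 1) := (mem_Bblk_iff f i' v).mpr hb
    exact disjoint_Pi G f hf huv hlt hu hv
  have key : ∀ u v : V, u ≠ v → ¬ G.Adj u v →
      ∃ i, 1 ≤ i ∧ i ≤ k ∧ ¬ (Igraph G f i).Adj u v := by
    intro u v hne huv
    have hfne : (f u : ℕ) ≠ (f v : ℕ) := fun h => hne (f.injective (Fin.ext h))
    rcases lt_or_gt_of_ne hfne with h|h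
    · obtain ⟨i, h1, h2, h3⟩ := ordered u v huv h
      exact ⟨i, h1, h2, fun hadj => Set.not_nonempty_empty (h3 ▸ hadj.2)⟩
    · obtain ⟨i, h1, h2, h3⟩ := ordered v u (fun h' => huv h'.symm) h
      refine ⟨i, h1, h2, fun hadj => Set.not_nonempty_empty (h3 ▸ hadj.symm.2)⟩
  refine ⟨key, fun u v => ⟨fun h => ⟨h.ne, fun i _ _ => ⟨h.ne, adj_Igraph_aux G f i h⟩⟩, ?_⟩⟩
  rintro ⟨hne, hall⟩
  by_contra huv
  obtain ⟨i, h1, h2, h3⟩ := key u v hne huv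
  exact h3 (hall i h1 h2)
end
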